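/- Let c, r > 0 and M ∈ ℝ, let y : ℝ → ℝ be continuous with 0 ≤ r · y t ≤ M for all t ≥ 0, and let w : ℝ → ℝ be differentiable with w 0 > 0 and ẇ t = w t · (−c + r · y t − w t) for all t ≥ 0. Then 0 < w t ≤ max (w 0) (M − c) for all t ≥ 0. -/

import Mathlib

open Set intervalIntegral

/-- In the scavenger equation `ẇ = w(−c + r y − w)` with bounded output,
the enslaved wage share remains positive and bounded. -/
theorem wage_share_positive_and_bounded
    (c r M : ℝ) (hc : 0 < c) (hr : 0 < r)
    (y : ℝ → ℝ) (hy : Continuous y)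
    (hyb : ∀ t : ℝ, 0 ≤ t → 0 ≤ r * y t ∧ r * y t ≤ M)
    (w : ℝ → ℝ) (hw : Differentiable ℝ w) (hw0 : 0 < w 0)
    (hw' : ∀ t : ℝ, 0 ≤ t → deriv w t = w t * (-c + r * y t - w t)) :
    ∀ t : ℝ, 0 ≤ t → 0 < w t ∧ w t ≤ max (w 0) (M - c) := by
  have hwc : Continuous w := hw.continuous
  -- the coefficient function
  set g : ℝ → ℝ := fun t => -c + r * y t - w t with hg_def
  have hgc : Continuous g := ((continuous_const.add (continuous_const.mul hy)).sub hwc)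
  set G : ℝ → ℝ := fun t => ∫ s in (0:ℝ)..t, g s with hG_def
  have hG : ∀ t : ℝ, HasDerivAt G (g t) t := fun t =>
    (hgc.integral_hasStrictDerivAt 0 t).hasDerivAt
  have hGc : Continuous G := by
    rw [continuous_iff_continuousAt]
    exact fun t => (hG t).continuousAt
  set φ : ℝ → ℝ := fun t => w t * Real.exp (-G t) with hφ_def
  have hφc : Continuous φ := hwc.mul ((hGc.neg).rexp)
  have hφ : ∀ t : ℝ, 0 ≤ t → HasDerivAt φ 0 t := by
    intro t ht
    have h1 : HasDerivAt w (deriv w t) t := (hw t).hasDerivAt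
    have h2 : HasDerivAt (fun u => Real.exp (-G u)) (Real.exp (-G t) * (-g t)) t :=
      ((hG t).neg).exp
    have := h1.mul h2
    convert this using 1
    · rfl
    · rfl
    · rfl
    rw [hw' t ht]
    simp only [hg_def]
    ring
  -- positivity
  have hpos : ∀ t : ℝ, 0 ≤ t → 0 < w t := by
    intro t ht
    have hconst := constant_of_has_deriv_right_zero (f := φ) (a := 0) (b := t)
      hφc.continuousOn (fun x hx => (hφ x hx.1).hasDerivWithinAt) t ⟨ht, le_rfl⟩
    have hφ0 : φ 0 = w 0 := by
      simp only [hφ_def, hG_def, intervalIntegral.integral_same, neg_zero, Real.exp_zero,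
        mul_one]
    rw [hφ0] at hconst
    simp only [hφ_def] at hconst
    have he : 0 < Real.exp (-G t) := Real.exp_pos _
    nlinarith [hconst, he, hw0]
  intro t ht
  refine ⟨hpos t ht, ?_⟩
  set B : ℝ := max (w 0) (M - c) with hB_def
  have hB0 : 0 < B := lt_of_lt_of_le hw0 (le_max_left _ _)
  have hBM : M - c ≤ B := le_max_right _ _
  by_contra hcon
  push_neg at hcon
  set S : Set ℝ := {u : ℝ | u ∈ Icc 0 t ∧ w u ≤ B} with hS_def
  have hSc : IsClosed S := by
    have : S = Icc 0 t ∩ {u | w u ≤ B} := rfl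
    rw [this]
    exact isClosed_Icc.inter (isClosed_le hwc continuous_const)
  have hSne : S.Nonempty := ⟨0, ⟨le_rfl, ht⟩, le_max_left _ _⟩
  have hSbdd : BddAbove S := ⟨t, fun u hu => hu.1.2⟩
  set s : ℝ := sSup S with hs_def
  have hsS : s ∈ S := hSc.csSup_mem hSne hSbdd
  have hs0 : 0 ≤ s := hsS.1.1
  have hst : s ≤ t := hsS.1.2
  have hws : w s ≤ B := hsS.2
  have hslt : s < t := lt_of_le_of_ne hst (by intro h; rw [h] at hws; exact absurd hws (not_le.2 hcon))
  have hgt : ∀ u : ℝ, s < u → u ≤ t → B < w u := by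
    intro u hu hut
    by_contra h
    push_neg at h
    exact absurd (le_csSup hSbdd ⟨⟨hs0.trans hu.le, hut⟩, h⟩) (not_le.2 hu)
  have hanti : StrictAntiOn w (Icc s t) := by
    apply strictAntiOn_of_deriv_neg (convex_Icc s t) hwc.continuousOn
    intro u hu
    rw [interior_Icc] at hu
    have hu0 : 0 ≤ u := hs0.trans hu.1.le
    have hwu : B < w u := hgt u hu.1 hu.2.le
    rw [hw' u hu0]
    have hyu := (hyb u hu0).2
    nlinarith
  have := hanti ⟨le_rfl, hst⟩ ⟨hst, le_rfl⟩ hslt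
  linarith
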